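/- The three operators Π₁ := id − 2Y₂ + ((m−2)/(m−1))Y₅, Π₂ := 2(Y₂ − Y₅), Π₃ := (m/(m−1))Y₅ on Sym²₀(ℝ^m) form a complete system of mutually orthogonal idempotents: Π_i² = Π_i for i = 1,2,3, Π_iΠ_j = 0 for i ≠ j, and Π₁ + Π₂ + Π₃ = id on Sym²₀(ℝ^m). -/

import Mathlib

open Matrix

namespace NLT

/-- `|ξ|²`, the squared Euclidean norm of `ξ ∈ ℝ^m`. -/
noncomputable def nsq {m : ℕ} (ξ : Fin m → ℝ) : ℝ := ∑ i, ξ i ^ 2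

/-- `(X₁φ)_{αβ} = δ_{αβ} tr φ`. -/
noncomputable def X1 {m : ℕ} (φ : Matrix (Fin m) (Fin m) ℝ) : Matrix (Fin m) (Fin m) ℝ :=
  Matrix.of fun α β => (if α = β then (1 : ℝ) else 0) * φ.trace

/-- `(X₂φ)_{αβ} = (1/(2|ξ|²)) (ξ_α (φξ)_β + ξ_β (φξ)_α)`. -/
noncomputable def X2 {m : ℕ} (ξ : Fin m → ℝ) (φ : Matrix (Fin m) (Fin m) ℝ) :
    Matrix (Fin m) (Fin m) ℝ :=
  Matrix.of fun α β => (1 / (2 * nsq ξ)) * (ξ α * φ.mulVec ξ β + ξ β * φ.mulVec ξ α)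

/-- `(X₃φ)_{αβ} = (1/|ξ|²) ξ_α ξ_β tr φ`. -/
noncomputable def X3 {m : ℕ} (ξ : Fin m → ℝ) (φ : Matrix (Fin m) (Fin m) ℝ) :
    Matrix (Fin m) (Fin m) ℝ :=
  Matrix.of fun α β => (1 / nsq ξ) * (ξ α * ξ β * φ.trace)

/-- `(X₄φ)_{αβ} = (1/|ξ|²) δ_{αβ} ⟨ξ, φξ⟩`. -/
noncomputable def X4 {m : ℕ} (ξ : Fin m → ℝ) (φ : Matrix (Fin m) (Fin m) ℝ) :
    Matrix (Fin m) (Fin m) ℝ :=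
  Matrix.of fun α β => (1 / nsq ξ) * (if α = β then (1 : ℝ) else 0) * (ξ ⬝ᵥ φ.mulVec ξ)

/-- `(X₅φ)_{αβ} = (1/|ξ|⁴) ξ_α ξ_β ⟨ξ, φξ⟩`. -/
noncomputable def X5 {m : ℕ} (ξ : Fin m → ℝ) (φ : Matrix (Fin m) (Fin m) ℝ) :
    Matrix (Fin m) (Fin m) ℝ :=
  Matrix.of fun α β => (1 / (nsq ξ) ^ 2) * (ξ α * ξ β * (ξ ⬝ᵥ φ.mulVec ξ))

/-- `Y₂ = X₂ − (1/m) X₄`, regarded on trace-free symmetric two-tensors. -/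
noncomputable def Y2 {m : ℕ} (ξ : Fin m → ℝ) (φ : Matrix (Fin m) (Fin m) ℝ) :
    Matrix (Fin m) (Fin m) ℝ :=
  X2 ξ φ - ((1 : ℝ) / m) • X4 ξ φ

/-- `Y₅ = X₅ − (1/m) X₄`, regarded on trace-free symmetric two-tensors. -/
noncomputable def Y5 {m : ℕ} (ξ : Fin m → ℝ) (φ : Matrix (Fin m) (Fin m) ℝ) :
    Matrix (Fin m) (Fin m) ℝ :=
  X5 ξ φ - ((1 : ℝ) / m) • X4 ξ φ

/-- `Π₁ = id − 2Y₂ + ((m−2)/(m−1)) Y₅`. -/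
noncomputable def Pi1 {m : ℕ} (ξ : Fin m → ℝ) (φ : Matrix (Fin m) (Fin m) ℝ) :
    Matrix (Fin m) (Fin m) ℝ :=
  φ - (2 : ℝ) • Y2 ξ φ + (((m : ℝ) - 2) / ((m : ℝ) - 1)) • Y5 ξ φ

/-- `Π₂ = 2(Y₂ − Y₅)`. -/
noncomputable def Pi2 {m : ℕ} (ξ : Fin m → ℝ) (φ : Matrix (Fin m) (Fin m) ℝ) :
    Matrix (Fin m) (Fin m) ℝ :=
  (2 : ℝ) • (Y2 ξ φ - Y5 ξ φ)

/-- `Π₃ = (m/(m−1)) Y₅`. -/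
noncomputable def Pi3 {m : ℕ} (ξ : Fin m → ℝ) (φ : Matrix (Fin m) (Fin m) ℝ) :
    Matrix (Fin m) (Fin m) ℝ :=
  ((m : ℝ) / ((m : ℝ) - 1)) • Y5 ξ φ


lemma nsq_eq' {m : ℕ} (ξ : Fin m → ℝ) : ξ ⬝ᵥ ξ = nsq ξ := by
  simp [nsq, dotProduct, sq]

lemma nsq_ne {m : ℕ} {ξ : Fin m → ℝ} (hξ : ξ ≠ 0) : nsq ξ ≠ 0 := by
  obtain ⟨i, hi⟩ := Function.ne_iff.mp hξ
  have hi' : ξ i ≠ 0 := hi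
  have h : 0 < nsq ξ :=
    Finset.sum_pos' (fun j _ => sq_nonneg _)
      ⟨i, Finset.mem_univ i, (sq_nonneg (ξ i)).lt_of_ne (Ne.symm (pow_ne_zero 2 hi'))⟩
  exact h.ne'

lemma vecMulVec_mulVec' {m : ℕ} (w u x : Fin m → ℝ) :
    (vecMulVec w u).mulVec x = (u ⬝ᵥ x) • w := by
  funext i
  simp only [Matrix.mulVec, Matrix.vecMulVec_apply, dotProduct, Pi.smul_apply,
    smul_eq_mul, Finset.sum_mul]
  exact Finset.sum_congr rfl fun j _ => by ring

lemma master {m : ℕ} (ξ v : Fin m → ℝ) (hn : nsq ξ ≠ 0)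
    (hm0 : (m:ℝ) ≠ 0) (hm1 : (m:ℝ) - 1 ≠ 0)
    (ψ : Matrix (Fin m) (Fin m) ℝ) (e f Q : ℝ)
    (h : ψ.mulVec ξ = e • v + f • ξ) (hQ : e * (ξ ⬝ᵥ v) + f * nsq ξ = Q) :
    Pi1 ξ ψ = ψ - (e / nsq ξ) • (vecMulVec ξ v + vecMulVec v ξ)
        + (Q / (((m:ℝ)-1) * nsq ξ)) • (1 : Matrix (Fin m) (Fin m) ℝ)
        + (((((m:ℝ)-2)/((m:ℝ)-1)) * Q - 2 * f * nsq ξ) / (nsq ξ)^2) • vecMulVec ξ ξ ∧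
    Pi2 ξ ψ = (e / nsq ξ) • (vecMulVec ξ v + vecMulVec v ξ)
        + ((2 * f * nsq ξ - 2 * Q) / (nsq ξ)^2) • vecMulVec ξ ξ ∧
    Pi3 ξ ψ = ((m:ℝ) * Q / (((m:ℝ)-1) * (nsq ξ)^2)) • vecMulVec ξ ξ
        - (Q / (((m:ℝ)-1) * nsq ξ)) • (1 : Matrix (Fin m) (Fin m) ℝ) := by
  have hQ'' : ξ ⬝ᵥ (e • v + f • ξ) = Q := by
    rw [dotProduct_add, dotProduct_smul, dotProduct_smul, smul_eq_mul, smul_eq_mul,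
      nsq_eq']
    exact hQ
  have hQ' : ξ ⬝ᵥ ψ.mulVec ξ = Q := by rw [h]; exact hQ''
  refine ⟨?_, ?_, ?_⟩ <;>
  · ext i j
    simp only [Pi1, Pi2, Pi3, Y2, Y5, X2, X4, X5, h, hQ', hQ'', Matrix.add_apply,
      Matrix.sub_apply, Matrix.smul_apply, Matrix.of_apply, Matrix.one_apply,
      Matrix.vecMulVec_apply, Pi.add_apply, Pi.smul_apply, smul_eq_mul]
    rcases eq_or_ne i j with hij | hij <;>
      simp only [hij, if_pos, if_neg, if_true, ite_true, ite_false] <;>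
      field_simp <;> ring

set_option maxHeartbeats 2000000 in
theorem Pi_aux (m : ℕ) (hm : 2 ≤ m) (ξ : Fin m → ℝ) (hξ : ξ ≠ 0)
    (φ : Matrix (Fin m) (Fin m) ℝ) (hφ : φ.IsSymm) (hφ0 : φ.trace = 0) :
    Pi1 ξ (Pi1 ξ φ) = Pi1 ξ φ ∧
    Pi2 ξ (Pi2 ξ φ) = Pi2 ξ φ ∧
    Pi3 ξ (Pi3 ξ φ) = Pi3 ξ φ ∧
    Pi1 ξ (Pi2 ξ φ) = 0 ∧
    Pi2 ξ (Pi1 ξ φ) = 0 ∧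
    Pi1 ξ (Pi3 ξ φ) = 0 ∧
    Pi3 ξ (Pi1 ξ φ) = 0 ∧
    Pi2 ξ (Pi3 ξ φ) = 0 ∧
    Pi3 ξ (Pi2 ξ φ) = 0 ∧
    Pi1 ξ φ + Pi2 ξ φ + Pi3 ξ φ = φ := by
  have hn : nsq ξ ≠ 0 := nsq_ne hξ
  have hm0 : (m:ℝ) ≠ 0 := Nat.cast_ne_zero.mpr (by omega)
  have hm2 : (2:ℝ) ≤ (m:ℝ) := by exact_mod_cast hm
  have hm1 : (m:ℝ) - 1 ≠ 0 := by linarith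
  set v : Fin m → ℝ := φ.mulVec ξ with hv
  set q : ℝ := ξ ⬝ᵥ v with hq
  have Mφ := master ξ v hn hm0 hm1 φ 1 0 q (by simp [hv]) (by rw [← hq]; ring)
  -- mulVec of the three projections
  have hmv1 : (Pi1 ξ φ).mulVec ξ = (0:ℝ) • v + (0:ℝ) • ξ := by
    rw [Mφ.1]
    funext i
    simp only [Matrix.add_mulVec, Matrix.sub_mulVec, Matrix.smul_mulVec,
      Matrix.one_mulVec, vecMulVec_mulVec', Pi.add_apply, Pi.sub_apply, Pi.smul_apply,
      smul_eq_mul, nsq_eq', dotProduct_comm v ξ, ← hq, ← hv]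
    field_simp
    ring
  have hmv2 : (Pi2 ξ φ).mulVec ξ = (1:ℝ) • v + (-(q / nsq ξ)) • ξ := by
    rw [Mφ.2.1]
    funext i
    simp only [Matrix.add_mulVec, Matrix.smul_mulVec, vecMulVec_mulVec',
      Pi.add_apply, Pi.smul_apply, smul_eq_mul, nsq_eq', dotProduct_comm v ξ, ← hq, ← hv]
    field_simp
    ring
  have hmv3 : (Pi3 ξ φ).mulVec ξ = (0:ℝ) • v + (q / nsq ξ) • ξ := by
    rw [Mφ.2.2]
    funext i
    simp only [Matrix.sub_mulVec, Matrix.smul_mulVec, Matrix.one_mulVec,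
      vecMulVec_mulVec', Pi.add_apply, Pi.sub_apply, Pi.smul_apply, smul_eq_mul,
      nsq_eq', ← hq, ← hv]
    field_simp
    ring
  have M1 := master ξ v hn hm0 hm1 (Pi1 ξ φ) 0 0 0 hmv1 (by ring)
  have M2 := master ξ v hn hm0 hm1 (Pi2 ξ φ) 1 (-(q / nsq ξ)) 0 hmv2
    (by rw [← hq]; field_simp; ring)
  have M3 := master ξ v hn hm0 hm1 (Pi3 ξ φ) 0 (q / nsq ξ) q hmv3
    (by rw [← hq]; field_simp; ring)
  refine ⟨?_, ?_, ?_, ?_, ?_, ?_, ?_, ?_, ?_, ?_⟩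
  · -- Pi1 Pi1
    rw [M1.1]; simp
  · -- Pi2 Pi2
    rw [M2.2.1, Mφ.2.1]
    ext i j
    simp only [Matrix.add_apply, Matrix.smul_apply, Matrix.vecMulVec_apply, smul_eq_mul]
    field_simp
    ring
  · -- Pi3 Pi3
    rw [M3.2.2, Mφ.2.2]
  · -- Pi1 Pi2
    rw [M2.1, Mφ.2.1]
    ext i j
    simp only [Matrix.add_apply, Matrix.sub_apply, Matrix.smul_apply,
      Matrix.vecMulVec_apply, Matrix.one_apply, Matrix.zero_apply, smul_eq_mul]
    rcases eq_or_ne i j with hij | hij <;> simp only [hij, ite_true, ite_false] <;>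
      field_simp <;> ring
  · -- Pi2 Pi1
    rw [M1.2.1]; simp
  · -- Pi1 Pi3
    rw [M3.1, Mφ.2.2]
    ext i j
    simp only [Matrix.add_apply, Matrix.sub_apply, Matrix.smul_apply,
      Matrix.vecMulVec_apply, Matrix.one_apply, Matrix.zero_apply, smul_eq_mul]
    rcases eq_or_ne i j with hij | hij <;> simp only [hij, ite_true, ite_false] <;>
      field_simp <;> ring
  · -- Pi3 Pi1
    rw [M1.2.2]; simp
  · -- Pi2 Pi3
    rw [M3.2.1]
    ext i j
    simp only [Matrix.add_apply, Matrix.smul_apply, Matrix.vecMulVec_apply,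
      Matrix.zero_apply, smul_eq_mul]
    field_simp
    ring
  · -- Pi3 Pi2
    rw [M2.2.2]; simp
  · -- sum
    rw [Mφ.1, Mφ.2.1, Mφ.2.2]
    have hP : ((((m:ℝ)-2)/((m:ℝ)-1)) * q - 2 * 0 * nsq ξ) / (nsq ξ)^2
        + (2 * 0 * nsq ξ - 2*q)/(nsq ξ)^2 + (m:ℝ)*q/(((m:ℝ)-1)*(nsq ξ)^2) = 0 := by
      field_simp
      ring
    calc φ - (1 / nsq ξ) • (vecMulVec ξ v + vecMulVec v ξ)
          + (q / (((m:ℝ)-1) * nsq ξ)) • (1 : Matrix (Fin m) (Fin m) ℝ)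
          + (((((m:ℝ)-2)/((m:ℝ)-1)) * q - 2 * 0 * nsq ξ) / (nsq ξ)^2) • vecMulVec ξ ξ
          + ((1 / nsq ξ) • (vecMulVec ξ v + vecMulVec v ξ)
            + ((2 * 0 * nsq ξ - 2 * q) / (nsq ξ)^2) • vecMulVec ξ ξ)
          + (((m:ℝ) * q / (((m:ℝ)-1) * (nsq ξ)^2)) • vecMulVec ξ ξ
            - (q / (((m:ℝ)-1) * nsq ξ)) • (1 : Matrix (Fin m) (Fin m) ℝ))
        = φ + (((((m:ℝ)-2)/((m:ℝ)-1)) * q - 2 * 0 * nsq ξ) / (nsq ξ)^2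
            + (2 * 0 * nsq ξ - 2*q)/(nsq ξ)^2
            + (m:ℝ)*q/(((m:ℝ)-1)*(nsq ξ)^2)) • vecMulVec ξ ξ := by module
      _ = φ := by rw [hP, zero_smul, add_zero]



/-- `Π₁, Π₂, Π₃` form a complete system of mutually orthogonal idempotents
on trace-free symmetric two-tensors. -/
theorem Pi_complete_orthogonal_idempotents (m : ℕ) (hm : 2 ≤ m) (ξ : Fin m → ℝ) (hξ : ξ ≠ 0)
    (φ : Matrix (Fin m) (Fin m) ℝ) (hφ : φ.IsSymm) (hφ0 : φ.trace = 0) :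
    Pi1 ξ (Pi1 ξ φ) = Pi1 ξ φ ∧
    Pi2 ξ (Pi2 ξ φ) = Pi2 ξ φ ∧
    Pi3 ξ (Pi3 ξ φ) = Pi3 ξ φ ∧
    Pi1 ξ (Pi2 ξ φ) = 0 ∧
    Pi2 ξ (Pi1 ξ φ) = 0 ∧
    Pi1 ξ (Pi3 ξ φ) = 0 ∧
    Pi3 ξ (Pi1 ξ φ) = 0 ∧
    Pi2 ξ (Pi3 ξ φ) = 0 ∧
    Pi3 ξ (Pi2 ξ φ) = 0 ∧
    Pi1 ξ φ + Pi2 ξ φ + Pi3 ξ φ = φ  :=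
  Pi_aux m hm ξ hξ φ hφ hφ0

end NLT
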